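/- arXiv:2510.20623 — 2 statements merged into one kernel-verified Lean document; each statement's English description precedes it below -/
import Mathlib

section
/- Let W : ℝ^{3×3} → [0, ∞) be twice continuously differentiable on an open neighborhood of the identity matrix Id and satisfy W(R) = 0 for every R ∈ SO(3). Define the linear map ℒ : ℝ^{3×3} → ℝ^{3×3} by ⟨ℒF₁, F₂⟩ = D²W(Id)[F₁, F₂] (Frobenius inner product). Then ℒS = 0 for every skew-symmetric matrix S, and consequently ℒF = ℒ(sym F) for every F ∈ ℝ^{3×3}, where sym F := ½(F + Fᵀ). -/
/- STATEMENT 4: Let `W : ℝ^{3×3} → [0,∞)` be C² near `Id` with `W = 0` on SO(3), and let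
`ℒ` be defined by `⟨ℒF₁, F₂⟩ = D²W(Id)[F₁,F₂]` (Frobenius inner product).  Then `ℒS = 0`
for every skew-symmetric `S`, and `ℒF = ℒ(sym F)` for every `F`. -/

open Matrix

noncomputable section

attribute [local instance]
  Matrix.frobeniusNormedAddCommGroup Matrix.frobeniusNormedSpace

abbrev Mat3 := Matrix (Fin 3) (Fin 3) ℝ

/-- The special orthogonal group SO(3). -/
def SO3 : Set Mat3 := {R | Rᵀ * R = 1 ∧ R.det = 1}

/-- The Frobenius inner product `A : B = Σᵢⱼ Aᵢⱼ Bᵢⱼ`. -/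
def finner (A B : Mat3) : ℝ := ∑ i, ∑ j, A i j * B i j

/-- The symmetric part of a matrix. -/
def symPart (M : Mat3) : Mat3 := (1 / 2 : ℝ) • (M + Mᵀ)

/-! ### Auxiliary material -/

open Filter Topology Asymptotics

set_option maxHeartbeats 1000000

lemma finner_sub_left (A B C : Mat3) : finner (A - B) C = finner A C - finner B C := by
  simp [finner, sub_mul, Finset.sum_sub_distrib]

lemma finner_self_eq_zero {A : Mat3} (h : finner A A = 0) : A = 0 := by
  have h1 : ∀ i ∈ (Finset.univ : Finset (Fin 3)), (0:ℝ) ≤ ∑ j, A i j * A i j :=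
    fun i _ => Finset.sum_nonneg fun j _ => mul_self_nonneg _
  ext i j
  have h2 := (Finset.sum_eq_zero_iff_of_nonneg h1).1 h i (Finset.mem_univ i)
  have h3 := (Finset.sum_eq_zero_iff_of_nonneg
    (fun j _ => mul_self_nonneg (A i j))).1 h2 j (Finset.mem_univ j)
  simpa using mul_self_eq_zero.1 h3

lemma cayley_mem_SO3 {S : Mat3} (hS : Sᵀ = -S) {t : ℝ}
    (hdet : IsUnit ((1 - t • S).det)) :
    (1 + t • S) * (1 - t • S)⁻¹ ∈ SO3 := by
  set A : Mat3 := t • S with hA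
  have hAT : Aᵀ = -A := by rw [hA, transpose_smul, hS, smul_neg]
  set N : Mat3 := 1 - A with hN
  set P : Mat3 := 1 + A with hP
  have hNT : Nᵀ = P := by
    rw [hN, hP, transpose_sub, transpose_one, hAT, sub_neg_eq_add]
  have hPT : Pᵀ = N := by
    rw [hN, hP, transpose_add, transpose_one, hAT, ← sub_eq_add_neg]
  have hdetP : IsUnit P.det := by rw [← hNT, det_transpose]; exact hdet
  have hcomm : N * P = P * N := by rw [hN, hP]; noncomm_ring
  constructor
  · have hTinv : (N⁻¹)ᵀ = P⁻¹ := by rw [transpose_nonsing_inv, hNT]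
    rw [transpose_mul, hTinv, hPT]
    calc P⁻¹ * N * (P * N⁻¹) = P⁻¹ * (N * P) * N⁻¹ := by
          simp only [Matrix.mul_assoc]
      _ = P⁻¹ * (P * N) * N⁻¹ := by rw [hcomm]
      _ = (P⁻¹ * P) * (N * N⁻¹) := by simp only [Matrix.mul_assoc]
      _ = 1 := by
          rw [Matrix.nonsing_inv_mul _ hdetP, Matrix.mul_nonsing_inv _ hdet, one_mul]
  · have hdPN : P.det = N.det := by rw [← hNT, det_transpose]
    rw [det_mul, det_nonsing_inv, hdPN, Ring.mul_inverse_cancel _ hdet]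

lemma cayley_expand {S : Mat3} {t : ℝ} (hdet : IsUnit ((1 - t • S).det)) :
    (1 + t • S) * (1 - t • S)⁻¹ =
      1 + (2 * t) • S + (2 * t ^ 2) • (S * S * (1 - t • S)⁻¹) := by
  have hinv : (1 - t • S) * (1 - t • S)⁻¹ = 1 := Matrix.mul_nonsing_inv _ hdet
  have key : (1 + (2 * t) • S) * (1 - t • S) + (2 * t ^ 2) • (S * S) = 1 + t • S := by
    simp only [mul_sub, add_mul, one_mul, mul_one, smul_mul_assoc, Matrix.mul_smul,
      smul_smul]
    module
  calc (1 + t • S) * (1 - t • S)⁻¹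
      = ((1 + (2 * t) • S) * (1 - t • S) + (2 * t ^ 2) • (S * S)) * (1 - t • S)⁻¹ := by
        rw [key]
    _ = (1 + (2 * t) • S) * ((1 - t • S) * (1 - t • S)⁻¹)
          + (2 * t ^ 2) • (S * S * (1 - t • S)⁻¹) := by
        rw [Matrix.add_mul, Matrix.smul_mul, Matrix.mul_assoc]
    _ = 1 + (2 * t) • S + (2 * t ^ 2) • (S * S * (1 - t • S)⁻¹) := by
        rw [hinv, mul_one]

lemma det_cont (S : Mat3) : Continuous fun t : ℝ => ((1 : Mat3) - t • S).det := by
  simp only [Matrix.det_fin_three, Matrix.sub_apply, Matrix.smul_apply, Matrix.one_apply,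
    smul_eq_mul]
  norm_num
  fun_prop

lemma eventually_det_isUnit (S : Mat3) :
    ∀ᶠ t in 𝓝 (0:ℝ), IsUnit (((1 : Mat3) - t • S).det) := by
  have h0 : (((1:Mat3) - (0:ℝ) • S)).det = 1 := by simp
  have h1 : ∀ᶠ t in 𝓝 (0:ℝ), ((1 : Mat3) - t • S).det ≠ 0 := by
    have := (det_cont S).continuousAt (x := 0)
    exact this.eventually_ne (by rw [h0]; norm_num)
  filter_upwards [h1] with t ht
  exact isUnit_iff_ne_zero.2 ht

lemma inv_norm_bound {S : Mat3} {t : ℝ} (hdet : IsUnit (((1 : Mat3) - t • S).det))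
    (ht : |t| * ‖S‖ ≤ 1 / 2) :
    ‖((1 : Mat3) - t • S)⁻¹‖ ≤ 2 * ‖(1 : Mat3)‖ := by
  set X : Mat3 := ((1 : Mat3) - t • S)⁻¹ with hX
  have h1 : ((1 : Mat3) - t • S) * X = 1 := Matrix.mul_nonsing_inv _ hdet
  have h2 : X = 1 + t • (S * X) := by
    have : X - t • (S * X) = 1 := by
      rw [← h1, Matrix.sub_mul, Matrix.one_mul, Matrix.smul_mul]
    rw [← this]; abel
  have h3 : ‖X‖ ≤ ‖(1 : Mat3)‖ + |t| * (‖S‖ * ‖X‖) := by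
    calc ‖X‖ = ‖(1 : Mat3) + t • (S * X)‖ := by rw [← h2]
      _ ≤ ‖(1 : Mat3)‖ + ‖t • (S * X)‖ := norm_add_le _ _
      _ ≤ ‖(1 : Mat3)‖ + |t| * (‖S‖ * ‖X‖) := by
          rw [norm_smul, Real.norm_eq_abs]
          have := Matrix.frobenius_norm_mul S X
          have h4 : (0:ℝ) ≤ |t| := abs_nonneg t
          nlinarith
  nlinarith [norm_nonneg X, abs_nonneg t, norm_nonneg S,
    mul_le_mul_of_nonneg_right ht (norm_nonneg X)]

theorem L_kills_skew_and_depends_on_sym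
    (W : Mat3 → ℝ) (U : Set Mat3) (hU : IsOpen U) (hIdU : (1 : Mat3) ∈ U)
    (hC2 : ContDiffOn ℝ 2 W U)
    (hpos : ∀ F : Mat3, 0 ≤ W F)
    (hSO : ∀ R ∈ SO3, W R = 0)
    (L : Mat3 → Mat3)
    (hL : ∀ F₁ F₂ : Mat3, finner (L F₁) F₂ = fderiv ℝ (fderiv ℝ W) 1 F₁ F₂) :
    (∀ S : Mat3, Sᵀ = -S → L S = 0) ∧ (∀ F : Mat3, L F = L (symPart F)) := by
  set Q : Mat3 →L[ℝ] Mat3 →L[ℝ] ℝ := fderiv ℝ (fderiv ℝ W) 1 with hQdef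
  have hId : (1 : Mat3) ∈ SO3 := ⟨by simp, by simp⟩
  have hW1 : W 1 = 0 := hSO 1 hId
  have hC2At : ContDiffAt ℝ 2 W 1 := hC2.contDiffAt (hU.mem_nhds hIdU)
  have hdiffU : ∀ y ∈ U, DifferentiableAt ℝ W y := fun y hy =>
    (hC2.contDiffAt (hU.mem_nhds hy)).differentiableAt (by norm_num)
  have hmin : IsLocalMin W 1 := by
    filter_upwards with x
    rw [hW1]; exact hpos x
  have hgrad0 : fderiv ℝ W 1 = 0 := hmin.fderiv_eq_zero
  have hQ' : HasFDerivAt (fderiv ℝ W) Q 1 :=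
    ((hC2At.fderiv_right (m := 1) (le_refl _)).differentiableAt one_ne_zero).hasFDerivAt
  obtain ⟨r, hr, hball⟩ := Metric.isOpen_iff.1 hU 1 hIdU
  -- second-order Taylor expansion of W at 1 along a direction w
  have taylor : ∀ w : Mat3, ‖w‖ < r →
      (fun h : ℝ => W (1 + h • w) - h ^ 2 / 2 * Q w w) =o[𝓝[>] 0] fun h => h ^ 2 := by
    intro w hw
    have s_conv : Convex ℝ (Metric.ball (1 : Mat3) r) := convex_ball (1 : Mat3) r
    have hint : interior (Metric.ball (1 : Mat3) r) = Metric.ball 1 r :=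
      Metric.isOpen_ball.interior_eq
    have hf : ∀ x ∈ interior (Metric.ball (1:Mat3) r),
        HasFDerivAt W (fderiv ℝ W x) x := by
      intro x hx
      rw [hint] at hx
      exact (hdiffU x (hball hx)).hasFDerivAt
    have hx : HasFDerivWithinAt (fderiv ℝ W) Q (interior (Metric.ball (1:Mat3) r)) 1 :=
      hQ'.hasFDerivWithinAt
    have hv : (1 : Mat3) + 0 ∈ interior (Metric.ball (1:Mat3) r) := by
      rw [hint]; simpa using Metric.mem_ball_self (x := (1:Mat3)) hr
    have hw' : (1 : Mat3) + 0 + w ∈ interior (Metric.ball (1:Mat3) r) := by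
      rw [hint]
      simpa [Metric.mem_ball, dist_eq_norm] using hw
    have TA := s_conv.taylor_approx_two_segment hf (Metric.mem_ball_self (x := (1:Mat3)) hr) hx hv hw'
    have hz1 : ∀ v : Mat3, fderiv ℝ W 1 v = 0 := fun v => by rw [hgrad0]; rfl
    have hz2 : ∀ v : Mat3, Q 0 v = 0 := fun v => by simp
    refine TA.congr_left (fun h => ?_)
    erw [hz1 w, hz2 w]
    simp [hW1]
    exact Or.inl rfl
  -- positive semidefiniteness of Q
  have hPSD : ∀ w : Mat3, 0 ≤ Q w w := by
    have small : ∀ w : Mat3, ‖w‖ < r → 0 ≤ Q w w := by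
      intro w hw
      by_contra hneg
      push_neg at hneg
      have TA := (isLittleO_iff.1 (taylor w hw)) (c := -(Q w w)/4) (by linarith)
      obtain ⟨h, hh, hhpos⟩ := (TA.and self_mem_nhdsWithin).exists
      replace hhpos : (0:ℝ) < h := hhpos
      rw [Real.norm_eq_abs, Real.norm_eq_abs, abs_le] at hh
      have h1 := hh.2
      have h2 : |h ^ 2| = h ^ 2 := abs_of_nonneg (sq_nonneg h)
      rw [h2] at h1
      have h3 : 0 ≤ W (1 + h • w) := hpos _
      nlinarith [pow_pos hhpos 2]
    intro w
    have hw1 : (0:ℝ) < ‖w‖ + 1 := by positivity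
    set c : ℝ := r / (2 * (‖w‖ + 1)) with hc
    have hcpos : 0 < c := by positivity
    have hcw : ‖c • w‖ < r := by
      rw [norm_smul, Real.norm_eq_abs, abs_of_pos hcpos, hc]
      rw [div_mul_eq_mul_div, div_lt_iff₀ (by positivity)]
      have hlt : ‖w‖ < 2 * (‖w‖ + 1) := by linarith [norm_nonneg w]
      exact (mul_lt_mul_iff_right₀ hr).2 hlt
    have h0 := small (c • w) hcw
    have hQs : Q (c • w) (c • w) = c ^ 2 * Q w w := by
      simp only [_root_.map_smul, ContinuousLinearMap.smul_apply, smul_eq_mul]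
      ring
    rw [hQs] at h0
    nlinarith [pow_pos hcpos 2]
  -- Q vanishes on skew-symmetric matrices
  have hskew0 : ∀ S : Mat3, Sᵀ = -S → Q S S = 0 := by
    have small : ∀ S : Mat3, Sᵀ = -S → ‖S‖ < r → Q S S = 0 := by
      intro S hS hSr
      set C : ℝ := ‖S * S‖ * (2 * ‖(1:Mat3)‖) + 1 with hCdef
      have hC0 : (0:ℝ) ≤ ‖S * S‖ * (2 * ‖(1:Mat3)‖) := by positivity
      have hCpos : 0 < C := by positivity
      have key : ∀ ε : ℝ, 0 < ε → |Q S S| ≤ ε * (C + 2) := by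
        intro ε hε
        -- a ball around 1 where the gradient of W is smaller than ε
        have htend : Tendsto (fderiv ℝ W) (𝓝 1) (𝓝 0) := by
          rw [← hgrad0]; exact hQ'.continuousAt
        have hev : ∀ᶠ y in 𝓝 (1:Mat3),
            @Norm.norm (Mat3 →L[ℝ] ℝ) ContinuousLinearMap.hasOpNorm (fderiv ℝ W y) < ε ∧ y ∈ U := by
          have h2 : Tendsto (fun y : Mat3 =>
              @Norm.norm (Mat3 →L[ℝ] ℝ) ContinuousLinearMap.hasOpNorm (fderiv ℝ W y)) (𝓝 1) (𝓝 0) := by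
            have := ((@continuous_norm (Mat3 →L[ℝ] ℝ)
              ContinuousLinearMap.toSeminormedAddCommGroup.toSeminormedAddGroup).tendsto 0).comp htend
            have hz : @Norm.norm (Mat3 →L[ℝ] ℝ) ContinuousLinearMap.hasOpNorm 0 = 0 :=
              ContinuousLinearMap.opNorm_zero
            rw [hz] at this
            exact this
          exact (h2.eventually_lt_const hε).and (hU.eventually_mem hIdU)
        obtain ⟨δ, hδpos, hδ⟩ := Metric.eventually_nhds_iff_ball.1 hev
        -- eventual facts about the Cayley curve, for small h > 0
        have Edet : ∀ᶠ h in 𝓝 (0:ℝ), IsUnit (((1:Mat3) - (h/2) • S).det) := by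
          have htm : Tendsto (fun h : ℝ => h / 2) (𝓝 0) (𝓝 0) := by
            simpa using (tendsto_id (α := ℝ) (x := 𝓝 0)).div_const (2:ℝ)
          exact htm.eventually (eventually_det_isUnit S)
        have Ebnd : ∀ᶠ h in 𝓝 (0:ℝ), |h/2| * ‖S‖ ≤ 1/2 := by
          have htm : Tendsto (fun h : ℝ => |h/2| * ‖S‖) (𝓝 0) (𝓝 0) := by
            have : Continuous fun h : ℝ => |h/2| * ‖S‖ := by fun_prop
            have h00 := this.tendsto 0
            simpa using h00
          exact htm.eventually_le_const (by norm_num)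
        have Esm : ∀ᶠ h in 𝓝 (0:ℝ), |h| * ‖S‖ < δ/2 := by
          have htm : Tendsto (fun h : ℝ => |h| * ‖S‖) (𝓝 0) (𝓝 0) := by
            have : Continuous fun h : ℝ => |h| * ‖S‖ := by fun_prop
            have h00 := this.tendsto 0
            simpa using h00
          exact htm.eventually_lt_const (by positivity)
        have Eq2 : ∀ᶠ h in 𝓝 (0:ℝ), h^2/2 * (‖S * S‖ * (2 * ‖(1:Mat3)‖)) < δ/2 := by
          have htm : Tendsto (fun h : ℝ => h^2/2 * (‖S * S‖ * (2 * ‖(1:Mat3)‖)))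
              (𝓝 0) (𝓝 0) := by
            have : Continuous fun h : ℝ => h^2/2 * (‖S * S‖ * (2 * ‖(1:Mat3)‖)) := by
              fun_prop
            have h00 := this.tendsto 0
            simpa using h00
          exact htm.eventually_lt_const (by positivity)
        have ETay := isLittleO_iff.1 (taylor S hSr) hε
        have hall := (((((Edet.filter_mono nhdsWithin_le_nhds).and
          (Ebnd.filter_mono nhdsWithin_le_nhds)).and
          (Esm.filter_mono nhdsWithin_le_nhds)).and
          (Eq2.filter_mono nhdsWithin_le_nhds)).and ETay).and self_mem_nhdsWithin
        obtain ⟨h, ⟨⟨⟨⟨⟨hdet, hbnd⟩, hsm⟩, hq2⟩, htay⟩, hhpos⟩⟩ := hall.exists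
        replace hhpos : (0:ℝ) < h := hhpos
        rw [Real.norm_eq_abs, Real.norm_eq_abs,
          abs_of_nonneg (sq_nonneg h)] at htay
        set V : Mat3 := S * S * ((1:Mat3) - (h/2) • S)⁻¹ with hV
        have hVb : ‖V‖ ≤ ‖S * S‖ * (2 * ‖(1:Mat3)‖) := by
          calc ‖V‖ ≤ ‖S * S‖ * ‖((1:Mat3) - (h/2) • S)⁻¹‖ :=
                Matrix.frobenius_norm_mul _ _
            _ ≤ ‖S * S‖ * (2 * ‖(1:Mat3)‖) :=
                mul_le_mul_of_nonneg_left (inv_norm_bound hdet hbnd) (norm_nonneg _)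
        set R : Mat3 := (1 + (h/2) • S) * ((1:Mat3) - (h/2) • S)⁻¹ with hR
        have hWR : W R = 0 := hSO R (cayley_mem_SO3 hS hdet)
        have hRx : R = 1 + h • S + (h^2/2) • V := by
          have hce := cayley_expand (S := S) (t := h/2) hdet
          have e1 : 2 * (h/2) = h := by ring
          have e2 : 2 * (h/2)^2 = h^2/2 := by ring
          rw [e1, e2] at hce
          rw [hR, hce, hV]
        have hdist1 : (1:Mat3) + h • S ∈ Metric.ball (1:Mat3) δ := by
          rw [Metric.mem_ball, dist_eq_norm]
          have : (1:Mat3) + h • S - 1 = h • S := by abel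
          rw [this, norm_smul, Real.norm_eq_abs]
          linarith
        have hq2' : h^2/2 * ‖V‖ < δ/2 := by
          have := mul_le_mul_of_nonneg_left hVb (by positivity : (0:ℝ) ≤ h^2/2)
          linarith
        have hdist2 : R ∈ Metric.ball (1:Mat3) δ := by
          rw [Metric.mem_ball, dist_eq_norm, hRx]
          have : (1:Mat3) + h • S + (h^2/2) • V - 1 = h • S + (h^2/2) • V := by abel
          rw [this]
          calc ‖h • S + (h^2/2) • V‖ ≤ ‖h • S‖ + ‖(h^2/2) • V‖ := norm_add_le _ _
            _ = |h| * ‖S‖ + |h^2/2| * ‖V‖ := by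
                rw [norm_smul, norm_smul, Real.norm_eq_abs, Real.norm_eq_abs]
            _ = |h| * ‖S‖ + h^2/2 * ‖V‖ := by rw [abs_of_nonneg (by positivity : (0:ℝ) ≤ h^2/2)]
            _ < δ/2 + δ/2 := by linarith
            _ = δ := by ring
        -- mean value estimate on the ball
        have hMVT := Convex.norm_image_sub_le_of_norm_fderiv_le
          (f := W) (C := ε) (s := Metric.ball (1:Mat3) δ)
          (fun x hx => hdiffU x (hδ x hx).2) (fun x hx => le_of_lt (hδ x hx).1)
          (convex_ball (1:Mat3) δ) hdist2 hdist1
        have hdiff : (1:Mat3) + h • S - R = -((h^2/2) • V) := by rw [hRx]; abel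
        rw [hdiff, norm_neg, norm_smul] at hMVT
        simp only [Real.norm_eq_abs] at hMVT
        rw [abs_of_nonneg (by positivity : (0:ℝ) ≤ h^2/2), hWR, sub_zero] at hMVT
        -- combine the two estimates
        have hup : |W (1 + h • S)| ≤ ε * (h^2/2 * (C - 1)) := by
          have : ε * (h^2/2 * ‖V‖) ≤ ε * (h^2/2 * (C - 1)) := by
            have h1 : h^2/2 * ‖V‖ ≤ h^2/2 * (C - 1) := by
              have := mul_le_mul_of_nonneg_left hVb (by positivity : (0:ℝ) ≤ h^2/2)
              simp only [hCdef]
              linarith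
            exact mul_le_mul_of_nonneg_left h1 hε.le
          linarith
        have e3 : |h^2/2 * Q S S| = h^2/2 * |Q S S| := by
          rw [abs_mul, abs_of_nonneg (by positivity : (0:ℝ) ≤ h^2/2)]
        have htri : h^2/2 * |Q S S| ≤ ε * (h^2/2 * (C - 1)) + ε * h^2 := by
          rw [← e3]
          calc |h^2/2 * Q S S|
              = |W (1 + h • S) - (W (1 + h • S) - h^2/2 * Q S S)| := by ring_nf
            _ ≤ |W (1 + h • S)| + |W (1 + h • S) - h^2/2 * Q S S| := abs_sub _ _
            _ ≤ ε * (h^2/2 * (C - 1)) + ε * h^2 := add_le_add hup htay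
        have h2p : (0:ℝ) < h^2/2 := by positivity
        have hfin : ε * (h^2/2 * (C - 1)) + ε * h^2 = h^2/2 * (ε * (C + 1)) := by ring
        have hstep : ε * (C + 1) ≤ ε * (C + 2) :=
          mul_le_mul_of_nonneg_left (by linarith) hε.le
        have hmono : h^2/2 * (ε * (C + 1)) ≤ h^2/2 * (ε * (C + 2)) :=
          mul_le_mul_of_nonneg_left hstep h2p.le
        have hfinal : h^2/2 * |Q S S| ≤ h^2/2 * (ε * (C + 2)) := by linarith
        exact le_of_mul_le_mul_left hfinal h2p
      have habs : |Q S S| ≤ 0 := by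
        by_contra hcon
        push_neg at hcon
        have hkey := key (|Q S S| / (2 * (C + 2))) (by positivity)
        rw [div_mul_eq_mul_div] at hkey
        have hC2 : (0:ℝ) < C + 2 := by linarith
        rw [mul_div_assoc] at hkey
        have : (C + 2) / (2 * (C + 2)) = 1/2 := by field_simp
        rw [this] at hkey
        linarith
      exact abs_eq_zero.1 (le_antisymm habs (abs_nonneg _))
    intro S hS
    have hS1 : (0:ℝ) < ‖S‖ + 1 := by positivity
    set c : ℝ := r / (2 * (‖S‖ + 1)) with hc
    have hcpos : 0 < c := by positivity
    have hcS : (c • S)ᵀ = -(c • S) := by rw [transpose_smul, hS, smul_neg]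
    have hcw : ‖c • S‖ < r := by
      rw [norm_smul, Real.norm_eq_abs, abs_of_pos hcpos, hc]
      rw [div_mul_eq_mul_div, div_lt_iff₀ (by positivity)]
      have hlt : ‖S‖ < 2 * (‖S‖ + 1) := by linarith [norm_nonneg S]
      exact (mul_lt_mul_iff_right₀ hr).2 hlt
    have h0 := small (c • S) hcS hcw
    have hQs : Q (c • S) (c • S) = c ^ 2 * Q S S := by
      simp only [_root_.map_smul, ContinuousLinearMap.smul_apply, smul_eq_mul]
      ring
    rw [hQs] at h0
    have hc2 : (0:ℝ) < c ^ 2 := pow_pos hcpos 2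
    have := mul_eq_zero.1 h0
    rcases this with h | h
    · exact absurd h (ne_of_gt hc2)
    · exact h
  -- symmetry of the Hessian
  have hsymm : ∀ v w : Mat3, Q v w = Q w v := by
    intro v w
    exact (hC2At.isSymmSndFDerivAt (by simp)).eq v w
  -- Q S F = 0 for skew S and arbitrary F
  have hQzero : ∀ S : Mat3, Sᵀ = -S → ∀ F : Mat3, Q S F = 0 := by
    intro S hS F
    have hb : 0 ≤ Q F F := hPSD F
    have key : ∀ t : ℝ, 0 ≤ 2 * t * Q S F + t ^ 2 * Q F F := by
      intro t
      have h1 : 0 ≤ Q (S + t • F) (S + t • F) := hPSD _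
      have expand : Q (S + t • F) (S + t • F)
          = Q S S + t * Q S F + t * Q F S + t ^ 2 * Q F F := by
        simp only [_root_.map_add, _root_.map_smul, ContinuousLinearMap.add_apply,
          ContinuousLinearMap.smul_apply, smul_eq_mul]
        ring
      rw [expand, hskew0 S hS, hsymm F S] at h1
      linarith
    set a : ℝ := Q S F
    set b : ℝ := Q F F
    have hb1 : (0:ℝ) < b + 1 := by linarith
    have h2 := key (-a / (b + 1))
    have h3 : 0 ≤ (2 * (-a / (b + 1)) * a + (-a / (b + 1)) ^ 2 * b) * (b + 1) ^ 2 :=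
      mul_nonneg h2 (sq_nonneg _)
    have h4 : (2 * (-a / (b + 1)) * a + (-a / (b + 1)) ^ 2 * b) * (b + 1) ^ 2
        = -(a ^ 2) * (b + 2) := by
      field_simp
      ring
    rw [h4] at h3
    have h5 : a^2 * (b + 2) ≤ 0 := by linarith
    have h6 : 0 ≤ a^2 * (b + 2) := mul_nonneg (sq_nonneg a) (by linarith)
    have h7 : a^2 * (b + 2) = 0 := le_antisymm h5 h6
    have h8 : a^2 = 0 := by
      rcases mul_eq_zero.1 h7 with h | h
      · exact h
      · exact absurd h (by linarith)
    exact pow_eq_zero_iff two_ne_zero |>.1 h8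
  constructor
  · intro S hS
    have h0 : finner (L S) (L S) = 0 := by rw [hL]; exact hQzero S hS (L S)
    exact finner_self_eq_zero h0
  · intro F
    have hskewpart : (F - symPart F)ᵀ = -(F - symPart F) := by
      simp only [symPart, transpose_sub, transpose_smul, transpose_add, transpose_transpose]
      module
    have hz : finner (L F - L (symPart F)) (L F - L (symPart F)) = 0 := by
      rw [finner_sub_left, hL, hL]
      have h5 : Q (F - symPart F) (L F - L (symPart F)) = 0 :=
        hQzero _ hskewpart (L F - L (symPart F))
      have h6 : Q (F - symPart F) = Q F - Q (symPart F) := _root_.map_sub Q _ _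
      rw [h6, ContinuousLinearMap.sub_apply] at h5
      linarith
    have := finner_self_eq_zero hz
    exact sub_eq_zero.1 this
end
end

section
/- Let W : ℝ^{3×3} → ℝ be differentiable at every point and frame indifferent, i.e. W(RF) = W(F) for every R ∈ SO(3) and F ∈ ℝ^{3×3}. Let h > 0, let G ∈ ℝ^{3×3}, and set E := h^{-2} DW(Id + h²G). Then E − Eᵀ = −h² (E Gᵀ − G Eᵀ). -/
/- STATEMENT 7: For a frame-indifferent differentiable `W`, `h > 0`, `G ∈ ℝ^{3×3}` and
`E := h⁻² DW(Id + h²G)`, one has `E − Eᵀ = −h²(E Gᵀ − G Eᵀ)`. -/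

open Matrix

noncomputable section

attribute [local instance]
  Matrix.frobeniusNormedAddCommGroup Matrix.frobeniusNormedSpace

attribute [local instance] Matrix.frobeniusNormedRing Matrix.frobeniusNormedAlgebra

open NormedSpace in
/-- Transpose commutes with the matrix exponential (for the Frobenius norm topology). -/
lemma my_exp_transpose (A : Mat3) : exp Aᵀ = (exp A)ᵀ := by
  let T : Mat3 →L[ℝ] Mat3 :=
    LinearMap.toContinuousLinearMap
      { toFun := fun M => Mᵀ
        map_add' := fun _ _ => Matrix.transpose_add _ _
        map_smul' := fun _ _ => Matrix.transpose_smul _ _ }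
  have hs := NormedSpace.expSeries_summable' (𝕂 := ℝ) A
  rw [NormedSpace.exp_eq_tsum ℝ]
  calc (∑' (n : ℕ), ((n.factorial : ℕ) : ℝ)⁻¹ • Aᵀ ^ n)
      = ∑' (n : ℕ), T (((n.factorial : ℕ) : ℝ)⁻¹ • A ^ n) := by
        congr 1; funext n
        show ((n.factorial : ℕ) : ℝ)⁻¹ • Aᵀ ^ n = ((((n.factorial : ℕ) : ℝ)⁻¹) • A ^ n)ᵀ
        rw [transpose_smul, transpose_pow]
    _ = T (∑' (n : ℕ), ((n.factorial : ℕ) : ℝ)⁻¹ • A ^ n) := (T.map_tsum hs).symm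
    _ = (∑' (n : ℕ), ((n.factorial : ℕ) : ℝ)⁻¹ • A ^ n)ᵀ := rfl

open NormedSpace in
/-- The exponential of a skew-symmetric matrix lies in SO(3). -/
lemma exp_skew_mem_SO3 (A : Mat3) (hA : Aᵀ = -A) (t : ℝ) :
    NormedSpace.exp (t • A) ∈ SO3 := by
  have horth : (exp (t • A))ᵀ * exp (t • A) = 1 := by
    rw [← my_exp_transpose, transpose_smul, hA, smul_neg,
      ← Matrix.exp_add_of_commute _ _ (Commute.neg_left (Commute.refl (t • A)))]
    simp [exp_zero]
  refine ⟨horth, ?_⟩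
  have h2 : (exp (t • A)).det ^ 2 = 1 := by
    have := congrArg Matrix.det horth
    rwa [det_mul, det_transpose, ← sq, det_one] at this
  have hhalf : exp (t • A) = exp ((t / 2) • A) * exp ((t / 2) • A) := by
    rw [← Matrix.exp_add_of_commute _ _ (Commute.refl _), ← add_smul]
    norm_num
  have hpos : 0 ≤ (exp (t • A)).det := by
    rw [hhalf, det_mul, ← sq]
    positivity
  nlinarith [h2, hpos]

lemma finner_mul_right (B A F : Mat3) : finner B (A * F) = finner (B * Fᵀ) A := by
  simp only [finner, mul_apply, transpose_apply, Fin.sum_univ_three]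
  ring

lemma finner_std (M : Mat3) (i j : Fin 3) :
    finner M (Matrix.single i j 1) = M i j := by
  fin_cases i <;> fin_cases j <;>
    simp [finner, Matrix.single, Fin.sum_univ_three]

lemma finner_sub (M X Y : Mat3) : finner M (X - Y) = finner M X - finner M Y := by
  simp [finner, Matrix.sub_apply, mul_sub, Finset.sum_sub_distrib]

lemma skew_perp_symm (M : Mat3) (hM : ∀ A : Mat3, Aᵀ = -A → finner M A = 0) : M = Mᵀ := by
  ext i j
  have hskew : (Matrix.single i j (1:ℝ) - Matrix.single j i 1)ᵀ
      = -(Matrix.single i j (1:ℝ) - Matrix.single j i 1) := by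
    simp [Matrix.transpose_sub, Matrix.single, ← Matrix.ext_iff, and_comm]
  have h0 := hM _ hskew
  rw [finner_sub, finner_std, finner_std] at h0
  have : M i j = M j i := by linarith
  simpa [transpose_apply] using this

open NormedSpace in
lemma stress_sym (W : Mat3 → ℝ) (DW : Mat3 → Mat3)
    (hdiff : Differentiable ℝ W)
    (hDW : ∀ F H : Mat3, fderiv ℝ W F H = finner (DW F) H)
    (hfi : ∀ R ∈ SO3, ∀ F : Mat3, W (R * F) = W F)
    (F : Mat3) : DW F * Fᵀ = (DW F * Fᵀ)ᵀ := by
  apply skew_perp_symm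
  intro A hA
  rw [← finner_mul_right]
  have hc : HasDerivAt (fun t : ℝ => exp (t • A) * F)
      (exp ((0:ℝ) • A) * A * F) 0 :=
    (hasDerivAt_exp_smul_const A (0:ℝ)).mul_const F
  have hW : HasDerivAt (fun t : ℝ => W (exp (t • A) * F))
      (fderiv ℝ W (exp ((0:ℝ) • A) * F) (exp ((0:ℝ) • A) * A * F)) 0 :=
    (hdiff _).hasFDerivAt.comp_hasDerivAt 0 hc
  have hconst : (fun t : ℝ => W (exp (t • A) * F)) = fun _ => W F := by
    funext t
    exact hfi _ (exp_skew_mem_SO3 A hA t) F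
  rw [hconst] at hW
  have h0 : fderiv ℝ W (exp ((0:ℝ) • A) * F) (exp ((0:ℝ) • A) * A * F) = 0 :=
    hW.unique (hasDerivAt_const 0 (W F))
  rw [hDW] at h0
  simpa [zero_smul, exp_zero] using h0

theorem rescaled_stress_skew_identity
    (W : Mat3 → ℝ) (DW : Mat3 → Mat3)
    (hdiff : Differentiable ℝ W)
    (hDW : ∀ F H : Mat3, fderiv ℝ W F H = finner (DW F) H)
    (hfi : ∀ R ∈ SO3, ∀ F : Mat3, W (R * F) = W F)
    (h : ℝ) (hh : 0 < h) (G E : Mat3)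
    (hE : E = (h ^ 2)⁻¹ • DW (1 + h ^ 2 • G)) :
    E - Eᵀ = -(h ^ 2 • (E * Gᵀ - G * Eᵀ)) := by
  have hne : (h : ℝ) ^ 2 ≠ 0 := pow_ne_zero 2 hh.ne'
  have hDWF : DW (1 + h ^ 2 • G) = h ^ 2 • E := by
    rw [hE, smul_inv_smul₀ hne]
  have hsym := stress_sym W DW hdiff hDW hfi (1 + h ^ 2 • G)
  rw [hDWF] at hsym
  simp only [transpose_add, transpose_one, transpose_smul, transpose_mul, transpose_transpose,
    mul_add, add_mul, mul_one, one_mul, mul_smul_comm, smul_mul_assoc, smul_smul] at hsym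
  have key : E + (h ^ 2) • (E * Gᵀ) = Eᵀ + (h ^ 2) • (G * Eᵀ) := by
    apply smul_right_injective Mat3 hne
    linear_combination (norm := module) hsym
  rw [smul_sub, neg_sub, sub_eq_sub_iff_add_eq_add, key, add_comm]
end
end
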